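/- arXiv:2104.14025 — 6 statements merged into one kernel-verified Lean document; each statement's English description precedes it below -/
import Mathlib

section
/- Stuttering equivalence of pointed traces is an equivalence relation: it is reflexive, symmetric, and transitive on the set of pointed traces. -/
/-- Two pointed traces `(σ, p)` and `(σ', p')` are stuttering equivalent if there exist
strictly increasing sequences of indices `p = i₀ < i₁ < ...` and `p' = j₀ < j₁ < ...`
such that for all `k` and all `l ∈ [i_k, i_{k+1})`, `l' ∈ [j_k, j_{k+1})`, `σ l = σ' l'`. -/
def StutterEquivPointed {A : Type*} (x y : (ℕ → A) × ℕ) : Prop :=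
  ∃ i j : ℕ → ℕ, i 0 = x.2 ∧ j 0 = y.2 ∧ StrictMono i ∧ StrictMono j ∧
    ∀ k l l', i k ≤ l → l < i (k + 1) → j k ≤ l' → l' < j (k + 1) → x.1 l = y.1 l'

private lemma blk_ex {f : ℕ → ℕ} (hf : StrictMono f) (n : ℕ) : ∃ k, n < f (k + 1) :=
  ⟨n, lt_of_lt_of_le (Nat.lt_succ_self n) hf.le_apply⟩

/-- The index of the block (w.r.t. the strictly increasing sequence `f`) containing `n`. -/
private noncomputable def blkIdx {f : ℕ → ℕ} (hf : StrictMono f) (n : ℕ) : ℕ :=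
  Nat.find (blk_ex hf n)

private lemma blk_lt {f : ℕ → ℕ} (hf : StrictMono f) (n : ℕ) :
    n < f (blkIdx hf n + 1) :=
  Nat.find_spec (blk_ex hf n)

private lemma blk_le {f : ℕ → ℕ} (hf : StrictMono f) {n : ℕ} (hn : f 0 ≤ n) :
    f (blkIdx hf n) ≤ n := by
  unfold blkIdx
  rcases Nat.eq_zero_or_pos (Nat.find (blk_ex hf n)) with h | h
  · rw [h]; exact hn
  · obtain ⟨k, hk⟩ := Nat.exists_eq_succ_of_ne_zero (Nat.pos_iff_ne_zero.mp h)
    have h2 : ¬ n < f (k + 1) := Nat.find_min (blk_ex hf n) (by omega)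
    rw [hk]
    exact Nat.le_of_not_lt h2

private lemma blk_zero {f : ℕ → ℕ} (hf : StrictMono f) {n : ℕ} (hn : n < f 1) :
    blkIdx hf n = 0 :=
  Nat.eq_zero_of_le_zero (Nat.find_min' (blk_ex hf n) hn)

/-- Stuttering equivalence of pointed traces is an equivalence relation. -/
theorem stutterEquivPointed_equivalence {A : Type*} :
    Equivalence (StutterEquivPointed (A := A)) := by
  constructor
  · rintro ⟨σ, p⟩
    refine ⟨fun k => p + k, fun k => p + k, by simp, by simp,
      fun a b h => by simpa using h, fun a b h => by simpa using h,
      fun k l l' h1 h2 h3 h4 => ?_⟩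
    have h1' : p + k ≤ l := h1
    have h2' : l < p + (k + 1) := h2
    have h3' : p + k ≤ l' := h3
    have h4' : l' < p + (k + 1) := h4
    exact congrArg σ (by omega)
  · rintro ⟨σ, p⟩ ⟨σ', p'⟩ ⟨i, j, hi0, hj0, hiM, hjM, h⟩
    exact ⟨j, i, hj0, hi0, hjM, hiM, fun k l l' a b c d => (h k l' l c d a b).symm⟩
  · rintro ⟨σx, px⟩ ⟨σy, py⟩ ⟨σz, pz⟩ ⟨i, j, hi0, hj0, hiM, hjM, hxy⟩
      ⟨i', j', hi'0, hj'0, hi'M, hj'M, hyz⟩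
    simp only at hi0 hj0 hi'0 hj'0 hxy hyz ⊢
    -- block indices w.r.t. j and i' (the two partitions of y)
    set β : ℕ → ℕ := blkIdx hjM with hβ
    set γ : ℕ → ℕ := blkIdx hi'M with hγ
    -- basic value facts
    have hxval : ∀ s l, i s ≤ l → l < i (s + 1) → σx l = σy (j s) := fun s l h1 h2 =>
      hxy s l (j s) h1 h2 le_rfl (hjM (Nat.lt_succ_self s))
    have hyval : ∀ s n, j s ≤ n → n < j (s + 1) → σy n = σy (j s) := by
      intro s n h1 h2
      have e1 := hxy s (i s) n le_rfl (hiM (Nat.lt_succ_self s)) h1 h2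
      have e2 := hxval s (i s) le_rfl (hiM (Nat.lt_succ_self s))
      rw [← e1, ← e2]
    have hzval : ∀ s l', j' s ≤ l' → l' < j' (s + 1) → σz l' = σy (i' s) := fun s l' h1 h2 =>
      (hyz s (i' s) l' le_rfl (hi'M (Nat.lt_succ_self s)) h1 h2).symm
    have hy'val : ∀ s n, i' s ≤ n → n < i' (s + 1) → σy n = σy (i' s) := by
      intro s n h1 h2
      have e1 := hyz s n (j' s) h1 h2 le_rfl (hj'M (Nat.lt_succ_self s))
      have e2 := hyz s (i' s) (j' s) le_rfl (hi'M (Nat.lt_succ_self s)) le_rfl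
        (hj'M (Nat.lt_succ_self s))
      rw [e1, e2]
    -- the merged refinement sequence on y
    set m : ℕ → ℕ := fun k => Nat.rec py
      (fun _ mk => max (j (β mk + 1)) (i' (γ mk + 1))) k with hm
    have hm0 : m 0 = py := rfl
    have hmsucc : ∀ k, m (k + 1) = max (j (β (m k) + 1)) (i' (γ (m k) + 1)) := fun k => rfl
    have hmlt : ∀ k, m k < m (k + 1) := by
      intro k
      rw [hmsucc k]
      exact lt_max_of_lt_left (blk_lt hjM (m k))
    have hmpy : ∀ k, py ≤ m k := by
      intro k
      induction k with
      | zero => exact le_rfl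
      | succ k ih => exact le_of_lt (lt_of_le_of_lt ih (hmlt k))
    -- y is constant on each interval [m k, m (k+1))
    have hyconst : ∀ k n, m k ≤ n → n < m (k + 1) → σy n = σy (m k) := by
      intro k n h1 h2
      rw [hmsucc k] at h2
      have hjle : j (β (m k)) ≤ m k := blk_le hjM (hj0 ▸ hmpy k)
      have hile : i' (γ (m k)) ≤ m k := blk_le hi'M (hi'0 ▸ hmpy k)
      rcases lt_max_iff.mp h2 with h | h
      · rw [hyval (β (m k)) n (le_trans hjle h1) h,
          ← hyval (β (m k)) (m k) hjle (blk_lt hjM (m k))]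
      · rw [hy'val (γ (m k)) n (le_trans hile h1) h,
          ← hy'val (γ (m k)) (m k) hile (blk_lt hi'M (m k))]
    -- the new index sequences
    refine ⟨fun k => i (β (m k)), fun k => j' (γ (m k)), ?_, ?_, ?_, ?_, ?_⟩
    · have h : β py = 0 := blk_zero hjM (hj0 ▸ hjM (Nat.lt_succ_self 0) : py < j 1)
      show i (β (m 0)) = px
      rw [hm0, h, hi0]
    · have h : γ py = 0 := blk_zero hi'M (hi'0 ▸ hi'M (Nat.lt_succ_self 0) : py < i' 1)
      show j' (γ (m 0)) = pz
      rw [hm0, h, hj'0]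
    · -- β (m k) strictly increases
      apply strictMono_nat_of_lt_succ
      intro k
      apply hiM
      have h1 : j (β (m k) + 1) ≤ m (k + 1) := le_max_left _ _
      have h2 : m (k + 1) < j (β (m (k + 1)) + 1) := blk_lt hjM _
      have := hjM.lt_iff_lt.mp (lt_of_le_of_lt h1 h2)
      omega
    · apply strictMono_nat_of_lt_succ
      intro k
      apply hj'M
      have h1 : i' (γ (m k) + 1) ≤ m (k + 1) := le_max_right _ _
      have h2 : m (k + 1) < i' (γ (m (k + 1)) + 1) := blk_lt hi'M _
      have := hi'M.lt_iff_lt.mp (lt_of_le_of_lt h1 h2)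
      omega
    · intro k l l' h1' h2' h3' h4'
      have h1 : i (β (m k)) ≤ l := h1'
      have h2 : l < i (β (m (k + 1))) := h2'
      have h3 : j' (γ (m k)) ≤ l' := h3'
      have h4 : l' < j' (γ (m (k + 1))) := h4'
      -- x side: σx l = σy (m k)
      have hx : σx l = σy (m k) := by
        have hl0 : i 0 ≤ l := le_trans (hiM.monotone (Nat.zero_le _)) h1
        set s := blkIdx hiM l with hs
        have hsle : i s ≤ l := blk_le hiM hl0
        have hslt : l < i (s + 1) := blk_lt hiM l
        have hlow : β (m k) ≤ s := by
          by_contra hc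
          push_neg at hc
          have : i (s + 1) ≤ i (β (m k)) := hiM.monotone (by omega)
          omega
        have hhigh : s < β (m (k + 1)) := by
          have : i s < i (β (m (k + 1))) := lt_of_le_of_lt hsle h2
          exact hiM.lt_iff_lt.mp this
        rw [hxval s l hsle hslt]
        rcases eq_or_lt_of_le hlow with he | hlt
        · rw [← he, ← hyval (β (m k)) (m k) (blk_le hjM (hj0 ▸ hmpy k)) (blk_lt hjM (m k))]
        · -- m k < j s < m (k+1)
          have h5 : m k < j s := lt_of_lt_of_le (blk_lt hjM (m k)) (hjM.monotone hlt)
          have h6 : j s < m (k + 1) := by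
            have : j s < j (β (m (k + 1))) := hjM hhigh
            exact lt_of_lt_of_le this (blk_le hjM (hj0 ▸ hmpy (k + 1)))
          exact hyconst k (j s) (le_of_lt h5) h6
      -- z side: σz l' = σy (m k)
      have hz : σz l' = σy (m k) := by
        have hl0 : j' 0 ≤ l' := le_trans (hj'M.monotone (Nat.zero_le _)) h3
        set s := blkIdx hj'M l' with hs
        have hsle : j' s ≤ l' := blk_le hj'M hl0
        have hslt : l' < j' (s + 1) := blk_lt hj'M l'
        have hlow : γ (m k) ≤ s := by
          by_contra hc
          push_neg at hc
          have : j' (s + 1) ≤ j' (γ (m k)) := hj'M.monotone (by omega)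
          omega
        have hhigh : s < γ (m (k + 1)) := by
          have : j' s < j' (γ (m (k + 1))) := lt_of_le_of_lt hsle h4
          exact hj'M.lt_iff_lt.mp this
        rw [hzval s l' hsle hslt]
        rcases eq_or_lt_of_le hlow with he | hlt
        · rw [← he, ← hy'val (γ (m k)) (m k) (blk_le hi'M (hi'0 ▸ hmpy k)) (blk_lt hi'M (m k))]
        · have h5 : m k < i' s := lt_of_lt_of_le (blk_lt hi'M (m k)) (hi'M.monotone hlt)
          have h6 : i' s < m (k + 1) := by
            have : i' s < i' (γ (m (k + 1))) := hi'M hhigh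
            exact lt_of_lt_of_le this (blk_le hi'M (hi'0 ▸ hmpy (k + 1)))
          exact hyconst k (i' s) (le_of_lt h5) h6
      show σx l = σz l'
      rw [hx, hz]
end

section
/- The compress and expand operations are mutually inverse: given a tuple of traces (σ₁,...,σₙ) of a Kripke structure, a fair trajectory t, and a tuple of fair stuttering traces (σ₁*,...,σₙ*), we have ((σ₁,...,σₙ), t) = compress(σ₁*,...,σₙ*) if and only if (σ₁*,...,σₙ*) = expand((σ₁,...,σₙ), t). -/
open Classical

variable {AP : Type*} {n : ℕ}

/-- Letters of the stuttering alphabet `Σ^st`: a letter over `AP` together with a flag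
recording whether the fresh stuttering proposition `st` is present. -/
abbrev StLetter (AP : Type*) := Set AP × Bool

/-- Pointers induced by a trajectory: `p i 0 = 0` and `p i (k+1) = p i k + 1` if
`i ∈ t k`, else `p i (k+1) = p i k`. -/
noncomputable def ptr (t : ℕ → Set (Fin n)) (i : Fin n) : ℕ → ℕ
  | 0 => 0
  | k + 1 => ptr t i k + (if i ∈ t k then 1 else 0)

/-- `expand((σ₁,...,σₙ), t)`: the tuple of stuttering traces induced by the traces `σ`
and the trajectory `t`; the `st` flag is set exactly at stuttering steps. -/
noncomputable def expand (σ : Fin n → ℕ → Set AP) (t : ℕ → Set (Fin n)) :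
    Fin n → ℕ → StLetter AP := fun i k =>
  match k with
  | 0 => (σ i 0, false)
  | k + 1 => (σ i (ptr t i (k + 1)), decide (ptr t i (k + 1) = ptr t i k))

/-- The trace part of `compress`: the `k`-th letter of `σᵢ` is the letter of `σᵢ*` at
the `k`-th non-stuttering position. -/
noncomputable def compressTrace (σstar : Fin n → ℕ → StLetter AP) :
    Fin n → ℕ → Set AP := fun i k =>
  (σstar i (Nat.nth (fun m => (σstar i m).2 = false) k)).1

/-- The trajectory part of `compress`: `i` moves at instant `k` iff position `k+1` of
`σᵢ*` is non-stuttering. -/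
def compressTraj (σstar : Fin n → ℕ → StLetter AP) : ℕ → Set (Fin n) := fun k =>
  {i | (σstar i (k + 1)).2 = false}

/-- A trajectory is fair (and consists of nonempty sets). -/
def FairTrajectory (t : ℕ → Set (Fin n)) : Prop :=
  (∀ k, (t k).Nonempty) ∧ ∀ i : Fin n, ∀ N, ∃ k, N ≤ k ∧ i ∈ t k

/-- A stuttering trace is fair: `st` is absent infinitely often. -/
def FairStTrace (τ : ℕ → StLetter AP) : Prop :=
  ∀ N, ∃ k, N ≤ k ∧ (τ k).2 = false

lemma expand_fst (σ : Fin n → ℕ → Set AP) (t : ℕ → Set (Fin n)) (i : Fin n) (m : ℕ) :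
    (expand σ t i m).1 = σ i (ptr t i m) := by
  cases m <;> rfl

lemma count_eq_ptr {t : ℕ → Set (Fin n)} {i : Fin n} (P : ℕ → Prop) [DecidablePred P]
    (hP0 : P 0) (hPs : ∀ k, P (k + 1) ↔ i ∈ t k) :
    ∀ m, Nat.count P (m + 1) = ptr t i m + 1
  | 0 => by simp [Nat.count_succ, hP0, ptr]
  | m + 1 => by
    have ih := count_eq_ptr P hP0 hPs m
    rw [Nat.count_succ, ih]
    by_cases h : i ∈ t m <;> simp [ptr, hPs, h]

/-- `compress` and `expand` are mutually inverse: `((σ₁,...,σₙ), t) = compress(σ*)` iff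
`σ* = expand((σ₁,...,σₙ), t)`.  The conventions fixed here (as in the paper's stuttering
construction) are that position `0` of each stuttering trace is non-stuttering and that
stuttering steps repeat the previous letter. -/
theorem compress_eq_iff_expand_eq (σ : Fin n → ℕ → Set AP) (t : ℕ → Set (Fin n))
    (σstar : Fin n → ℕ → StLetter AP)
    (hft : FairTrajectory t)
    (hfs : ∀ i, FairStTrace (σstar i))
    (h0 : ∀ i, (σstar i 0).2 = false)
    (hrep : ∀ i k, (σstar i (k + 1)).2 = true → (σstar i (k + 1)).1 = (σstar i k).1) :
    (compressTrace σstar = σ ∧ compressTraj σstar = t) ↔ σstar = expand σ t := by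
  constructor
  · rintro ⟨hσ, ht⟩
    funext i k
    set P : ℕ → Prop := fun m => (σstar i m).2 = false with hPdef
    have hP0 : P 0 := h0 i
    have hPs : ∀ m, P (m + 1) ↔ i ∈ t m := by
      intro m; rw [← ht]; exact Iff.rfl
    have hcount := count_eq_ptr (t := t) (i := i) P hP0 hPs
    have hσ' : ∀ j, σ i j = (σstar i (Nat.nth P j)).1 := by
      intro j; rw [← hσ]; rfl
    have hsnd : (σstar i k).2 = (expand σ t i k).2 := by
      cases k with
      | zero => simpa [expand] using h0 i
      | succ k =>
        show _ = decide (ptr t i (k + 1) = ptr t i k)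
        by_cases h : i ∈ t k
        · have hPk : P (k + 1) := (hPs k).2 h
          simp only [hPdef] at hPk
          simp [ptr, h, hPk]
        · have hPk : (σstar i (k + 1)).2 = true := by
            have : ¬ P (k + 1) := fun hp => h ((hPs k).1 hp)
            simp only [hPdef] at this
            cases hb : (σstar i (k + 1)).2
            · exact absurd hb this
            · rfl
          simp [ptr, h, hPk]
    have hfst : ∀ k, (σstar i k).1 = (expand σ t i k).1 := by
      intro k
      induction k with
      | zero =>
        have hn0 : Nat.nth P 0 = 0 := by
          have := Nat.nth_count (p := P) hP0
          simpa using this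
        show _ = σ i 0
        rw [hσ' 0, hn0]
      | succ k ih =>
        by_cases h : i ∈ t k
        · have hPk : P (k + 1) := (hPs k).2 h
          have hptr : ptr t i (k + 1) = Nat.count P (k + 1) := by
            have h1 := hcount k
            have h2 : ptr t i (k + 1) = ptr t i k + 1 := by simp [ptr, h]
            omega
          rw [expand_fst, hptr, hσ', Nat.nth_count hPk]
        · have hPk : (σstar i (k + 1)).2 = true := by
            have : ¬ P (k + 1) := fun hp => h ((hPs k).1 hp)
            simp only [hPdef] at this
            cases hb : (σstar i (k + 1)).2
            · exact absurd hb this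
            · rfl
          have hptr : ptr t i (k + 1) = ptr t i k := by simp [ptr, h]
          rw [hrep i k hPk, ih, expand_fst, expand_fst, hptr]
    exact Prod.ext (hfst k) hsnd
  · intro he
    subst he
    constructor
    · funext i k
      set P : ℕ → Prop := fun m => (expand σ t i m).2 = false with hPdef
      have hP0 : P 0 := by simp [hPdef, expand]
      have hPs : ∀ m, P (m + 1) ↔ i ∈ t m := by
        intro m
        by_cases h : i ∈ t m <;> simp [hPdef, expand, ptr, h]
      have hinf : (setOf P).Infinite := by
        apply Set.infinite_of_forall_exists_gt
        intro a
        obtain ⟨k, hk, hik⟩ := hft.2 i a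
        exact ⟨k + 1, (hPs k).2 hik, by omega⟩
      show (expand σ t i (Nat.nth P k)).1 = σ i k
      rw [expand_fst]
      have h1 : ptr t i (Nat.nth P k) + 1 = k + 1 := by
        rw [← count_eq_ptr (t := t) (i := i) P hP0 hPs,
          Nat.count_nth_succ_of_infinite hinf]
      have h2 : ptr t i (Nat.nth P k) = k := by omega
      rw [h2]
    · funext k
      ext i
      simp only [compressTraj, Set.mem_setOf_eq]
      by_cases h : i ∈ t k <;> simp [expand, ptr, h]
end

section
/- Every stuttering expansion of a path of a Kripke structure K corresponds to a path of the stuttering Kripke structure K^st: if ρ is a path of K and ρ' is obtained from ρ by replacing each state s at a repeated (stuttered) position with its stuttering copy s^st, then ρ' is a path of K^st, provided each state of ρ is repeated only finitely often. -/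
/-- A Kripke structure over states `S` with labels in `L`. -/
structure Kripke (S L : Type*) where
  init : Set S
  trans : S → S → Prop
  total : ∀ s, ∃ s', trans s s'
  label : S → L

/-- `ρ` is a path of `K`. -/
def IsPath {S L : Type*} (K : Kripke S L) (ρ : ℕ → S) : Prop :=
  ρ 0 ∈ K.init ∧ ∀ k, K.trans (ρ k) (ρ (k + 1))

/-- The stuttering Kripke structure `K^st` over states `S ⊕ S` (`Sum.inr s` is the
stuttering copy `s^st`). -/
def Kst {S AP : Type*} (K : Kripke S (Set AP)) : Kripke (S ⊕ S) (Set AP × Bool) where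
  init := Sum.inl '' K.init
  trans := fun x y =>
    match x, y with
    | Sum.inl s, Sum.inl s' => K.trans s s'
    | Sum.inl s, Sum.inr s' => s = s'
    | Sum.inr s, Sum.inr s' => s = s'
    | Sum.inr s, Sum.inl s' => K.trans s s'
  total := by
    intro x
    cases x with
    | inl s => obtain ⟨s', hs'⟩ := K.total s; exact ⟨Sum.inl s', hs'⟩
    | inr s => exact ⟨Sum.inr s, rfl⟩
  label := fun x =>
    match x with
    | Sum.inl s => (K.label s, false)
    | Sum.inr s => (K.label s, true)

/-- Every stuttering expansion of a path of `K` is a path of `K^st`: if `ρ'` is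
obtained from a path `ρ` of `K` by replacing each state `ρ k` with a finite nonempty
block `ρ k, (ρ k)^st, ..., (ρ k)^st` (blocks given by a strictly increasing sequence
`j` with `j 0 = 0`; finiteness of blocks corresponds to each state being repeated only
finitely often), then `ρ'` is a path of `K^st`. -/
theorem stutterExpansion_path_of_Kst {S AP : Type*} (K : Kripke S (Set AP))
    (ρ : ℕ → S) (hρ : IsPath K ρ) (j : ℕ → ℕ) (hj0 : j 0 = 0) (hj : StrictMono j)
    (ρ' : ℕ → S ⊕ S)
    (hfirst : ∀ k, ρ' (j k) = Sum.inl (ρ k))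
    (hstutter : ∀ k l, j k < l → l < j (k + 1) → ρ' l = Sum.inr (ρ k)) :
    IsPath (Kst K) ρ' := by
  constructor
  · have h0 : ρ' 0 = Sum.inl (ρ 0) := by have := hfirst 0; rwa [hj0] at this
    rw [h0]
    exact ⟨ρ 0, hρ.1, rfl⟩
  · intro l
    -- find greatest k with j k ≤ l
    have hex : ∃ k, j k ≤ l := ⟨0, by omega⟩
    have hbd : ∀ k, j k ≤ l → k ≤ l := fun k hk => le_trans (hj.le_apply) hk
    set k := Nat.findGreatest (fun k => j k ≤ l) l with hkdef
    have hk : j k ≤ l := Nat.findGreatest_spec (P := fun k => j k ≤ l) (Nat.zero_le l) (by omega)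
    have hmax : ∀ m, j m ≤ l → m ≤ k := by
      intro m hm
      by_contra h
      push_neg at h
      exact Nat.findGreatest_is_greatest h (hbd m hm) hm
    have hlt : l < j (k + 1) := by
      by_contra h
      push_neg at h
      exact absurd (hmax (k+1) h) (by omega)
    have hcur : ρ' l = Sum.inl (ρ k) ∨ ρ' l = Sum.inr (ρ k) := by
      rcases eq_or_lt_of_le hk with h | h
      · left; rw [← h]; exact hfirst k
      · right; exact hstutter k l h hlt
    rcases Nat.lt_or_ge (l+1) (j (k+1)) with hn | hn
    · have hnext : ρ' (l+1) = Sum.inr (ρ k) := hstutter k (l+1) (by omega) hn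
      rcases hcur with h | h <;> rw [h, hnext] <;> exact rfl
    · have heq : l + 1 = j (k+1) := by omega
      have hnext : ρ' (l+1) = Sum.inl (ρ (k+1)) := by rw [heq]; exact hfirst (k+1)
      rcases hcur with h | h <;> rw [h, hnext] <;> exact hρ.2 k
end

section
/- Every path ρ' of the stuttering Kripke structure K^st whose trace satisfies □◇¬st (i.e., visits non-stuttering states infinitely often) can be compressed, by removing all stuttering states, into an infinite path ρ of K, and ρ' is a stuttering expansion of ρ. -/
/-- `σ'` is a stuttering expansion of `σ`. -/
def StutterExpansion {A : Type*} (σ σ' : ℕ → A) : Prop :=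
  ∃ j : ℕ → ℕ, j 0 = 0 ∧ StrictMono j ∧
    ∀ k l, j k ≤ l → l < j (k + 1) → σ k = σ' l

/-- Every path `ρ'` of `K^st` visiting non-stuttering states infinitely often
(`□◇¬st`) can be compressed, by removing all stuttering states, into an infinite path
`ρ` of `K`, and `ρ'` is a stuttering expansion of `ρ`. -/
theorem fair_Kst_path_compresses {S AP : Type*} (K : Kripke S (Set AP))
    (ρ' : ℕ → S ⊕ S) (hρ' : IsPath (Kst K) ρ')
    (hfair : ∀ k, ∃ l, k ≤ l ∧ ∃ s : S, ρ' l = Sum.inl s) :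
    ∃ ρ : ℕ → S, IsPath K ρ ∧
      StutterExpansion ρ (fun k => Sum.elim id id (ρ' k)) := by
  classical
  obtain ⟨hinit, htrans⟩ := hρ'
  have hstep : ∀ m : ℕ, ∃ l, m < l ∧ ∃ s : S, ρ' l = Sum.inl s := by
    intro m
    obtain ⟨l, hl, s, hs⟩ := hfair (m + 1)
    exact ⟨l, hl, s, hs⟩
  set ρ'' : ℕ → S := fun k => Sum.elim id id (ρ' k) with hρ''def
  letI : ∀ m : ℕ, DecidablePred fun l => m < l ∧ ∃ s : S, ρ' l = Sum.inl s :=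
    fun _ _ => Classical.propDecidable _
  let j : ℕ → ℕ := fun k => Nat.rec 0 (fun _ jk => Nat.find (hstep jk)) k
  have hj0 : j 0 = 0 := rfl
  have hlt : ∀ k, j k < j (k + 1) := fun k => (Nat.find_spec (hstep (j k))).1
  have hinl : ∀ k, ∃ s, ρ' (j (k + 1)) = Sum.inl s := fun k =>
    (Nat.find_spec (hstep (j k))).2
  have hinlAll : ∀ k, ∃ s, ρ' (j k) = Sum.inl s := by
    intro k
    cases k with
    | zero =>
      obtain ⟨s, _, h0⟩ := hinit
      exact ⟨s, h0.symm⟩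
    | succ k => exact hinl k
  have hmid : ∀ k l, j k < l → l < j (k + 1) → ∃ s, ρ' l = Sum.inr s := by
    intro k l h1 h2
    have hm := Nat.find_min (hstep (j k)) h2
    push_neg at hm
    cases hx : ρ' l with
    | inl s => exact absurd hx (hm h1 s)
    | inr s => exact ⟨s, rfl⟩
  have hconst : ∀ l, (∃ s, ρ' (l + 1) = Sum.inr s) → ρ'' (l + 1) = ρ'' l := by
    rintro l ⟨s, hs⟩
    have ht := htrans l
    cases hx : ρ' l with
    | inl t =>
      rw [hx, hs] at ht
      simp only [Kst] at ht
      simp [hρ''def, hx, hs, ht]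
    | inr t =>
      rw [hx, hs] at ht
      simp only [Kst] at ht
      simp [hρ''def, hx, hs, ht]
  have hconstRange : ∀ k l, j k ≤ l → l < j (k + 1) → ρ'' l = ρ'' (j k) := by
    intro k l
    induction l with
    | zero =>
      intro h1 _
      have : j k = 0 := Nat.le_zero.mp h1
      rw [this]
    | succ l ih =>
      intro h1 h2
      rcases Nat.lt_or_ge (j k) (l + 1) with h | h
      · have hle : j k ≤ l := Nat.lt_succ_iff.mp h
        rw [hconst l (hmid k (l + 1) h h2)]
        exact ih hle (lt_trans (Nat.lt_succ_self l) h2)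
      · have : j k = l + 1 := le_antisymm h1 h
        rw [this]
  refine ⟨fun k => ρ'' (j k), ⟨?_, ?_⟩, j, hj0, strictMono_nat_of_lt_succ hlt,
    fun k l h1 h2 => (hconstRange k l h1 h2).symm⟩
  · obtain ⟨s, hs, h0⟩ := hinit
    have : ρ'' (j 0) = s := by simp [hρ''def, hj0, ← h0]
    show ρ'' (j 0) ∈ K.init
    rw [this]; exact hs
  · intro k
    obtain ⟨n, hn⟩ : ∃ n, j (k + 1) = n + 1 := ⟨j (k + 1) - 1, by have := hlt k; omega⟩
    obtain ⟨s, hs⟩ := hinl k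
    have hn' : ρ' (n + 1) = Sum.inl s := by rw [← hn]; exact hs
    have hρn : ρ'' n = ρ'' (j k) := by
      refine hconstRange k n (by have := hlt k; omega) (by omega)
    have ht := htrans n
    rw [hn'] at ht
    have hsval : ρ'' (j (k + 1)) = s := by simp [hρ''def, hs]
    show K.trans (ρ'' (j k)) (ρ'' (j (k + 1)))
    rw [hsval, ← hρn]
    cases hx : ρ' n with
    | inl t =>
      rw [hx] at ht
      simp only [Kst] at ht
      simpa [hρ''def, hx] using ht
    | inr t =>
      rw [hx] at ht
      simp only [Kst] at ht
      simpa [hρ''def, hx] using ht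
end

section
/- In the accelerated Kripke structure K^acc, the map acc from paths of K to paths of K^acc preserves the sequence of colors: the sequence of distinct consecutive colors (valuations of predicates P) along ρ equals the sequence of distinct consecutive colors along acc(ρ). -/
open Classical

/-- Two sequences have the same de-stuttered sequence (the sequence obtained by
collapsing consecutive equal elements) iff they are both stuttering expansions of a
common sequence. -/
def SameDestutter {A : Type*} (c₁ c₂ : ℕ → A) : Prop :=
  ∃ d : ℕ → A, StutterExpansion d c₁ ∧ StutterExpansion d c₂

/-- Position `k` is a change position of the sequence `c`: it is the initial position
or the value differs from the preceding one. -/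
def IsChange {C : Type*} (c : ℕ → C) (k : ℕ) : Prop :=
  k = 0 ∨ c k ≠ c (k - 1)

/-- The map `acc` from paths of `K` to paths of `K^acc` (states of `K^acc` are
`S ⊕ S`, with `Sum.inr s` the sink copy `s_⊥`): it keeps the initial state and the
states at which the color changes; if only finitely many color changes occur it pads
with the sink copy of the last kept state. -/
noncomputable def accPath {S C : Type*} (c : ℕ → C) (ρ : ℕ → S) : ℕ → S ⊕ S :=
  fun k =>
    if {m | IsChange c m}.Infinite ∨ k < {m | IsChange c m}.ncard then
      Sum.inl (ρ (Nat.nth (IsChange c) k))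
    else
      Sum.inr (ρ (Nat.nth (IsChange c) ({m | IsChange c m}.ncard - 1)))

/-- If there is no change position in `(a, l]`, then `c l = c a`. -/
private lemma const_of_no_change {C : Type*} (c : ℕ → C) (a : ℕ) :
    ∀ l, a ≤ l → (∀ m, a < m → m ≤ l → ¬ IsChange c m) → c l = c a := by
  intro l
  induction l with
  | zero => intro h _; interval_cases a; rfl
  | succ n ih =>
    intro hal h
    rcases Nat.lt_or_ge a (n + 1) with h1 | h1
    · have hnc := h (n + 1) h1 le_rfl
      have heq : c (n + 1) = c n := by
        by_contra hne
        exact hnc (Or.inr (by simpa using hne))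
      rw [heq]
      exact ih (by omega) (fun m hm hm' => h m hm (by omega))
    · have : a = n + 1 := by omega
      rw [this]

/-- `acc` preserves the sequence of colors: for a path `ρ` of `K`, the de-stuttered
sequence of colors (valuations `L(s) ∩ P`) along `ρ` equals the one along `acc(ρ)`
(recall `L^acc(s) = L(s)` and `L^acc(s_⊥) = L(s)`). -/
theorem accPath_preserves_colors {S AP : Type*} (K : Kripke S (Set AP)) (P : Set AP)
    (ρ : ℕ → S) (hρ : IsPath K ρ) :
    SameDestutter (fun k => K.label (ρ k) ∩ P)
      (fun k =>
        K.label (Sum.elim id id (accPath (fun m => K.label (ρ m) ∩ P) ρ k)) ∩ P) := by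
  classical
  set c : ℕ → Set AP := fun k => K.label (ρ k) ∩ P with hc
  set p : ℕ → Prop := IsChange c with hp
  set c' : ℕ → Set AP :=
    fun k => K.label (Sum.elim id id (accPath c ρ k)) ∩ P with hc'
  have hsetOf : {m | IsChange c m} = setOf p := rfl
  have hp0 : p 0 := Or.inl rfl
  have hnth0 : Nat.nth p 0 = 0 := Nat.nth_zero_of_zero hp0
  have hc'_pos : ∀ k, ({m | IsChange c m}.Infinite ∨ k < {m | IsChange c m}.ncard) →
      c' k = c (Nat.nth p k) := by
    intro k h
    simp only [hc', accPath, if_pos h, Sum.elim_inl, id_eq]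
    rfl
  have hc'_neg : ∀ k, ¬({m | IsChange c m}.Infinite ∨ k < {m | IsChange c m}.ncard) →
      c' k = c (Nat.nth p ({m | IsChange c m}.ncard - 1)) := by
    intro k h
    simp only [hc', accPath, if_neg h, Sum.elim_inr, id_eq]
    rfl
  refine ⟨c', ?_, ⟨id, rfl, strictMono_id, fun k l h1 h2 => ?_⟩⟩
  swap
  · simp only [id_eq] at h1 h2
    have : l = k := by omega
    rw [this]
  rcases (setOf p).finite_or_infinite with hfin | hinf
  · -- finitely many changes
    set N : ℕ := {m | IsChange c m}.ncard with hN
    have hNcard : N = hfin.toFinset.card :=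
      Set.ncard_eq_toFinset_card _ hfin
    have hNcard' : N = (@Set.Finite.toFinset ℕ (Set.ofPred p) hfin).card := hNcard
    have hNpos : 0 < N := by
      exact (Set.ncard_pos hfin).mpr ⟨0, hp0⟩
    have hninf : ¬ {m | IsChange c m}.Infinite := fun h => h hfin
    -- no change positions beyond `nth p (N-1)`
    have hnomore : ∀ m, Nat.nth p (N - 1) < m → ¬ p m := by
      intro m hm hpm
      have h1 : Nat.count p m < hfin.toFinset.card := Nat.count_lt_card hfin hpm
      have h2 : Nat.nth p (Nat.count p m) = m := Nat.nth_count hpm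
      have h3 : Nat.nth p (Nat.count p m) ≤ Nat.nth p (N - 1) :=
        Nat.nth_le_nth_of_lt_card hfin (by omega) (by omega)
      omega
    -- the reindexing function
    set j : ℕ → ℕ := fun k => if k < N then Nat.nth p k else Nat.nth p (N - 1) + (k - (N - 1))
      with hj
    have hjlt : ∀ k, k < N → j k = Nat.nth p k := fun k h => by simp [hj, h]
    have hjge : ∀ k, N ≤ k → j k = Nat.nth p (N - 1) + (k - (N - 1)) := fun k h => by
      simp [hj, Nat.not_lt.2 h]
    refine ⟨j, ?_, ?_, ?_⟩
    · rw [hjlt 0 hNpos, hnth0]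
    · intro a b hab
      rcases Nat.lt_or_ge b N with hb | hb
      · rw [hjlt a (by omega), hjlt b hb]
        exact Nat.nth_lt_nth_of_lt_card hfin hab (by omega)
      · rw [hjge b hb]
        rcases Nat.lt_or_ge a N with ha | ha
        · rw [hjlt a ha]
          have : Nat.nth p a ≤ Nat.nth p (N - 1) :=
            Nat.nth_le_nth_of_lt_card hfin (by omega) (by omega)
          omega
        · rw [hjge a ha]; omega
    · intro k l hkl hlk
      rcases Nat.lt_or_ge (k + 1) N with hk1 | hk1
      · -- both k and k+1 below N
        rw [hjlt k (by omega)] at hkl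
        rw [hjlt (k + 1) hk1] at hlk
        rw [hc'_pos k (Or.inr (by omega))]
        refine (const_of_no_change c (Nat.nth p k) l hkl ?_).symm
        intro m hm hml hpm
        have h1 : Nat.count p m < hfin.toFinset.card := Nat.count_lt_card hfin hpm
        have h2 : Nat.nth p (Nat.count p m) = m := Nat.nth_count hpm
        have h3 : k < Nat.count p m := by
          refine Nat.lt_of_nth_lt_nth_of_lt_card hfin (by omega) (by omega)
        have h4 : Nat.count p m < k + 1 := by
          refine Nat.lt_of_nth_lt_nth_of_lt_card hfin (by omega) (by omega)
        omega
      rcases Nat.lt_or_ge k N with hk | hk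
      · -- k = N - 1, k + 1 = N
        have hkN : k = N - 1 := by omega
        rw [hjlt k hk] at hkl
        rw [hjge (k + 1) (by omega)] at hlk
        have hleq : l = Nat.nth p k := by rw [hkN] at hkl ⊢; omega
        rw [hc'_pos k (Or.inr (by omega)), hleq]
      · -- k ≥ N : sink part
        rw [hjge k hk] at hkl
        rw [hc'_neg k (by push_neg; exact ⟨hfin, by omega⟩)]
        refine (const_of_no_change c (Nat.nth p (N - 1)) l (by omega) ?_).symm
        intro m hm _ hpm
        exact hnomore m hm hpm
  · -- infinitely many changes
    have hinf' : {m | IsChange c m}.Infinite := hinf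
    refine ⟨Nat.nth p, hnth0, Nat.nth_strictMono hinf, ?_⟩
    intro k l hkl hlk
    rw [hc'_pos k (Or.inl hinf')]
    refine (const_of_no_change c (Nat.nth p k) l hkl ?_).symm
    intro m hm hml hpm
    have h2 : Nat.nth p (Nat.count p m) = m := Nat.nth_count hpm
    have h3 : k < Nat.count p m := by
      rw [← Nat.nth_lt_nth hinf, h2]; omega
    have h4 : Nat.count p m < k + 1 := by
      rw [← Nat.nth_lt_nth hinf, h2]; omega
    omega
end

section
/- If two traces σ₁ and σ₂ admit stuttering expansions σ₁*, σ₂* such that σ₁*(k) ∩ P = σ₂*(k) ∩ P for all k (i.e., they can be aligned to agree on P at every step), then σ₁ and σ₂ have the same de-stuttered color sequence with respect to P. -/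
open Classical in
/-- The next change point of `f` after `k` (or `k+1` if `f` is constant from `k` on). -/
noncomputable def nxt {A : Type*} (f : ℕ → A) (k : ℕ) : ℕ :=
  if h : ∃ k', k < k' ∧ f k' ≠ f k then Nat.find h else k + 1

lemma lt_nxt {A : Type*} (f : ℕ → A) (k : ℕ) : k < nxt f k := by
  classical
  unfold nxt
  split
  · rename_i h
    exact (Nat.find_spec h).1
  · omega

lemma nxt_const {A : Type*} (f : ℕ → A) {k l : ℕ} (h1 : k ≤ l) (h2 : l < nxt f k) :
    f l = f k := by
  classical
  unfold nxt at h2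
  split at h2
  · by_contra hne
    have hkl : k < l := lt_of_le_of_ne h1 (by rintro rfl; exact hne rfl)
    exact absurd (Nat.find_le ⟨hkl, hne⟩) (not_le.mpr h2)
  · have : l = k := by omega
    simp [this]

/-- Change points of `f`, padded with unit steps in a constant tail. -/
noncomputable def pace {A : Type*} (f : ℕ → A) : ℕ → ℕ
  | 0 => 0
  | n + 1 => nxt f (pace f n)

lemma pace_mono {A : Type*} (f : ℕ → A) : StrictMono (pace f) :=
  strictMono_nat_of_lt_succ fun _ => lt_nxt f _

/-- Every sequence is a stuttering expansion of its padded destutter. -/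
lemma expand_pace {A : Type*} (f : ℕ → A) :
    StutterExpansion (fun n => f (pace f n)) f :=
  ⟨pace f, rfl, pace_mono f, fun _ l h1 h2 => (nxt_const f h1 h2).symm⟩

lemma block_exists {j : ℕ → ℕ} (hj0 : j 0 = 0) (hjm : StrictMono j) (l : ℕ) :
    ∃ t, j t ≤ l ∧ l < j (t + 1) := by
  have h : ∃ t, l < j t := ⟨l + 1, lt_of_lt_of_le (Nat.lt_succ_self l) hjm.le_apply⟩
  have ht0 : l < j (Nat.find h) := Nat.find_spec h
  have hpos : Nat.find h ≠ 0 := by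
    intro h0
    rw [h0, hj0] at ht0; omega
  obtain ⟨t, ht⟩ := Nat.exists_eq_succ_of_ne_zero hpos
  have hmin := Nat.find_min h (m := t) (by omega)
  rw [ht] at ht0
  exact ⟨t, by omega, ht0⟩

open Classical in
/-- Key alignment invariant: traversing change points of an expansion `c` of `a`
stays aligned with change points of `a` (or both enter a constant tail with
equal values). -/
lemma pace_align {A : Type*} (a c : ℕ → A) (j : ℕ → ℕ)
    (hj0 : j 0 = 0) (hjm : StrictMono j)
    (hblk : ∀ k l, j k ≤ l → l < j (k + 1) → a k = c l) :
    ∀ n, (pace c n = j (pace a n)) ∨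
      ((∀ k, pace a n ≤ k → a k = a (pace a n)) ∧
       (∀ l, pace c n ≤ l → c l = c (pace c n)) ∧
       c (pace c n) = a (pace a n)) := by
  intro n
  induction n with
  | zero => left; simp [pace, hj0]
  | succ n ih =>
    rcases ih with h | ⟨ha, hc, hv⟩
    · set k := pace a n with hk
      have hcjk : c (j k) = a k := (hblk k (j k) le_rfl (hjm (Nat.lt_succ_self k))).symm
      by_cases hex : ∃ k', k < k' ∧ a k' ≠ a k
      · left
        have hta : nxt a k = Nat.find hex := dif_pos hex
        obtain ⟨hkt0, hne⟩ := Nat.find_spec hex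
        set t0 := Nat.find hex with ht0def
        have hct0 : c (j t0) = a t0 :=
          (hblk t0 (j t0) le_rfl (hjm (Nat.lt_succ_self t0))).symm
        have hcex : ∃ l, j k < l ∧ c l ≠ c (j k) := by
          refine ⟨j t0, hjm hkt0, ?_⟩
          rw [hcjk, hct0]; exact hne
        have hnc : nxt c (j k) = j t0 := by
          rw [nxt, dif_pos hcex]
          rw [Nat.find_eq_iff]
          refine ⟨⟨hjm hkt0, by rw [hcjk, hct0]; exact hne⟩, ?_⟩
          intro l hl
          rintro ⟨hl1, hl2⟩
          obtain ⟨t, ht1, ht2⟩ := block_exists hj0 hjm l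
          have hkt : k ≤ t := by
            by_contra h'
            push_neg at h'
            have : j (t + 1) ≤ j k := hjm.monotone (by omega)
            omega
          have htt0 : t < t0 := by
            by_contra h'
            push_neg at h'
            have : j t0 ≤ j t := hjm.monotone h'
            omega
          have hat : a t = a k := by
            rcases eq_or_lt_of_le hkt with h' | h'
            · rw [← h']
            · by_contra hne'
              exact Nat.find_min hex htt0 ⟨h', hne'⟩
          exact hl2 (by rw [← hblk t l ht1 ht2, hat, hcjk])
        show nxt c (pace c n) = j (nxt a k)
        rw [h, hnc, hta]
      · have haconst : ∀ k', k ≤ k' → a k' = a k := by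
          intro k' hk'
          by_contra hne
          exact hex ⟨k', lt_of_le_of_ne hk' (by rintro rfl; exact hne rfl), hne⟩
        have hcconst : ∀ l, j k ≤ l → c l = a k := by
          intro l hl
          obtain ⟨t, ht1, ht2⟩ := block_exists hj0 hjm l
          have hkt : k ≤ t := by
            by_contra h'
            push_neg at h'
            have : j (t + 1) ≤ j k := hjm.monotone (by omega)
            omega
          rw [← hblk t l ht1 ht2, haconst t hkt]
        have hna : nxt a k = k + 1 := dif_neg hex
        have hnc : nxt c (j k) = j k + 1 := by
          apply dif_neg
          rintro ⟨l, hl1, hl2⟩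
          exact hl2 (by rw [hcconst l hl1.le, hcjk])
        right
        have hpa : pace a (n + 1) = k + 1 := by show nxt a k = k + 1; rw [hna]
        have hpc : pace c (n + 1) = j k + 1 := by show nxt c (pace c n) = j k + 1; rw [h, hnc]
        rw [hpa, hpc]
        refine ⟨fun k' hk' => ?_, fun l hl => ?_, ?_⟩
        · rw [haconst k' (by omega), haconst (k + 1) (by omega)]
        · rw [hcconst l (by omega), hcconst (j k + 1) (by omega)]
        · rw [hcconst (j k + 1) (by omega), haconst (k + 1) (by omega)]
    · right
      have hna : nxt a (pace a n) = pace a n + 1 := by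
        apply dif_neg
        rintro ⟨k', h1, h2⟩
        exact h2 (ha k' h1.le)
      have hnc : nxt c (pace c n) = pace c n + 1 := by
        apply dif_neg
        rintro ⟨l, h1, h2⟩
        exact h2 (hc l h1.le)
      have hpa : pace a (n + 1) = pace a n + 1 := hna
      have hpc : pace c (n + 1) = pace c n + 1 := hnc
      rw [hpa, hpc]
      refine ⟨fun k' hk' => ?_, fun l hl => ?_, ?_⟩
      · rw [ha k' (by omega), ha (pace a n + 1) (by omega)]
      · rw [hc l (by omega), hc (pace c n + 1) (by omega)]
      · rw [hc (pace c n + 1) (by omega), ha (pace a n + 1) (by omega), hv]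

/-- Padded destutters are invariant under stuttering expansion. -/
lemma desPad_eq {A : Type*} (a c : ℕ → A) (h : StutterExpansion a c) :
    ∀ n, a (pace a n) = c (pace c n) := by
  obtain ⟨j, hj0, hjm, hblk⟩ := h
  intro n
  rcases pace_align a c j hj0 hjm hblk n with h' | ⟨_, _, hv⟩
  · rw [h']
    exact hblk _ _ le_rfl (hjm (Nat.lt_succ_self _))
  · exact hv.symm

/-- If two traces `σ₁`, `σ₂` admit stuttering expansions that agree on `P` at every
step, then `σ₁` and `σ₂` have the same de-stuttered color sequence w.r.t. `P`. -/
theorem aligned_expansions_same_color_sequence {AP : Type*} (P : Set AP)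
    (σ₁ σ₂ σ₁s σ₂s : ℕ → Set AP)
    (h₁ : StutterExpansion σ₁ σ₁s) (h₂ : StutterExpansion σ₂ σ₂s)
    (hP : ∀ k, σ₁s k ∩ P = σ₂s k ∩ P) :
    SameDestutter (fun k => σ₁ k ∩ P) (fun k => σ₂ k ∩ P) := by
  set a := fun k => σ₁ k ∩ P with hadef
  set b := fun k => σ₂ k ∩ P with hbdef
  set c := fun k => σ₁s k ∩ P with hcdef
  have hac : StutterExpansion a c := by
    obtain ⟨j, h0, hm, hb⟩ := h₁
    exact ⟨j, h0, hm, fun k l hl1 hl2 => by simp only [hadef, hcdef, hb k l hl1 hl2]⟩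
  have hbc : StutterExpansion b c := by
    obtain ⟨j, h0, hm, hb⟩ := h₂
    exact ⟨j, h0, hm, fun k l hl1 hl2 => by
      simp only [hbdef, hcdef, hb k l hl1 hl2, hP l]⟩
  refine ⟨fun n => a (pace a n), expand_pace a, ?_⟩
  have heq : (fun n => a (pace a n)) = fun n => b (pace b n) := by
    funext n
    rw [desPad_eq a c hac n, desPad_eq b c hbc n]
  rw [heq]
  exact expand_pace b
end
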